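/- The clocked λ-calculus reduction is (finitarily) confluent: if M ↠c N₁ and M ↠c N₂ then there exists P with N₁ ↠c P and N₂ ↠c P. -/

import Mathlib

/-- clocked λ-terms: λ-terms with an extra unary constructor τ -/
inductive CLam : Type
  | var : Nat → CLam
  | app : CLam → CLam → CLam
  | lam : CLam → CLam
  | tau : CLam → CLam
deriving DecidableEq

namespace CLam

def lift (d : Nat) : CLam → CLam
  | var n => if n < d then var n else var (n+1)
  | app M N => app (lift d M) (lift d N)
  | lam M => lam (lift (d+1) M)
  | tau M => tau (lift d M)

def subst (k : Nat) (N : CLam) : CLam → CLam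
  | var n => if n = k then N else if k < n then var (n-1) else var n
  | app A B => app (subst k N A) (subst k N B)
  | lam A => lam (subst (k+1) (lift 0 N) A)
  | tau A => tau (subst k N A)

/-- one-step clocked reduction: compatible closure of
    (λ.M)N → τ(M[0:=N]) and (τ M)N → τ(M N) -/
inductive CStep : CLam → CLam → Prop
  | beta (M N : CLam) : CStep (app (lam M) N) (tau (subst 0 N M))
  | tauApp (M N : CLam) : CStep (app (tau M) N) (tau (app M N))
  | appL {M M'} (N) : CStep M M' → CStep (app M N) (app M' N)
  | appR (M) {N N'} : CStep N N' → CStep (app M N) (app M N')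
  | lam {M M'} : CStep M M' → CStep (lam M) (lam M')
  | tau {M M'} : CStep M M' → CStep (tau M) (tau M')

abbrev CStar : CLam → CLam → Prop := Relation.ReflTransGen CStep

/-- n-fold τ -/
def tauN : Nat → CLam → CLam
  | 0, M => M
  | n+1, M => tau (tauN n M)

theorem lift_lift {i j : Nat} (h : i ≤ j) : ∀ M, lift i (lift j M) = lift (j+1) (lift i M) := by
  intro M
  induction M generalizing i j with
  | var n =>
      simp only [lift]
      split_ifs <;> (try simp only [lift]) <;> (try split_ifs) <;>
        (try simp only [lift]) <;> (try split_ifs) <;>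
        first | rfl | (simp only [var.injEq]; omega) | omega
  | app A B ihA ihB => simp [lift, ihA h, ihB h]
  | lam A ih => simp [lift, ih (Nat.succ_le_succ h)]
  | tau A ih => simp [lift, ih h]

theorem subst_lift (k : Nat) (N : CLam) : ∀ M, subst k N (lift k M) = M := by
  intro M
  induction M generalizing k N with
  | var n =>
      simp only [lift, subst]
      split_ifs <;> (try simp only [lift, subst]) <;> (try split_ifs) <;>
        (try simp only [lift, subst]) <;> (try split_ifs) <;>
        first | rfl | (simp only [var.injEq]; omega) | omega
  | app A B ihA ihB => simp [lift, subst, ihA, ihB]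
  | lam A ih => simp [lift, subst, ih]
  | tau A ih => simp [lift, subst, ih]

theorem lift_subst_le {d k : Nat} (h : d ≤ k) (N : CLam) :
    ∀ M, lift d (subst k N M) = subst (k+1) (lift d N) (lift d M) := by
  intro M
  induction M generalizing d k N with
  | var n =>
      simp only [lift, subst]
      split_ifs <;> (try simp only [lift, subst]) <;> (try split_ifs) <;>
        (try simp only [lift, subst]) <;> (try split_ifs) <;>
        first | rfl | (simp only [var.injEq]; omega) | omega
  | app A B ihA ihB => simp [lift, subst, ihA h, ihB h]
  | lam A ih =>
      simp only [lift, subst, ih (Nat.succ_le_succ h)]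
      rw [lift_lift (Nat.zero_le d)]
  | tau A ih => simp [lift, subst, ih h]

theorem lift_subst_ge {d k : Nat} (h : k ≤ d) (N : CLam) :
    ∀ M, lift d (subst k N M) = subst k (lift d N) (lift (d+1) M) := by
  intro M
  induction M generalizing d k N with
  | var n =>
      simp only [lift, subst]
      split_ifs <;> (try simp only [lift, subst]) <;> (try split_ifs) <;>
        (try simp only [lift, subst]) <;> (try split_ifs) <;>
        first | rfl | (simp only [var.injEq]; omega) | omega
  | app A B ihA ihB => simp [lift, subst, ihA h, ihB h]
  | lam A ih =>
      simp only [lift, subst, ih (Nat.succ_le_succ h)]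
      rw [lift_lift (Nat.zero_le d)]
  | tau A ih => simp [lift, subst, ih h]

theorem subst_subst {j k : Nat} (h : j ≤ k) (N A : CLam) :
    ∀ M, subst k N (subst j A M) =
      subst j (subst k N A) (subst (k+1) (lift j N) M) := by
  intro M
  induction M generalizing j k N A with
  | var n =>
      simp only [subst]
      rcases Nat.lt_trichotomy n j with hnj | rfl | hnj
      · have h1 : ¬ n = j := by omega
        have h2 : ¬ j < n := by omega
        have h3 : ¬ n = k + 1 := by omega
        have h4 : ¬ k + 1 < n := by omega
        have h5 : ¬ n = k := by omega
        have h6 : ¬ k < n := by omega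
        simp [subst, h1, h2, h3, h4, h5, h6]
      · have h3 : ¬ n = k + 1 := by omega
        have h4 : ¬ k + 1 < n := by omega
        simp [subst, h3, h4]
      · have h1 : ¬ n = j := by omega
        have h2 : j < n := hnj
        rcases Nat.lt_trichotomy n (k+1) with hnk | rfl | hnk
        · have h5 : ¬ n - 1 = k := by omega
          have h6 : ¬ k < n - 1 := by omega
          have h7 : ¬ n = k + 1 := by omega
          have h8 : ¬ k + 1 < n := by omega
          simp [subst, h1, h2, h5, h6, h7, h8]
        · have h5 : k + 1 - 1 = k := by omega
          simp [subst, h1, h2, h5, subst_lift]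
        · have h5 : ¬ n - 1 = k := by omega
          have h6 : k < n - 1 := by omega
          have h7 : ¬ n = k + 1 := by omega
          have h8 : ¬ n - 1 = j := by omega
          have h9 : j < n - 1 := by omega
          simp [subst, h1, h2, h5, h6, h7, hnk, h8, h9]
  | app A' B' ihA ihB => simp [subst, ihA h, ihB h]
  | lam A' ih =>
      simp only [subst, ih (Nat.succ_le_succ h)]
      rw [lift_subst_le (Nat.zero_le k), lift_lift (Nat.zero_le j)]
  | tau A' ih => simp [subst, ih h]

/-- parallel reduction -/
inductive Par : CLam → CLam → Prop
  | var (n) : Par (var n) (var n)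
  | app {M M' N N'} : Par M M' → Par N N' → Par (app M N) (app M' N')
  | lam {M M'} : Par M M' → Par (lam M) (lam M')
  | tau {M M'} : Par M M' → Par (tau M) (tau M')
  | beta {M M' N N'} : Par M M' → Par N N' →
      Par (app (lam M) N) (tau (subst 0 N' M'))
  | tauApp {M M' N N'} : Par M M' → Par N N' →
      Par (app (tau M) N) (tau (app M' N'))

theorem par_refl : ∀ M, Par M M := by
  intro M
  induction M with
  | var n => exact Par.var n
  | app A B ihA ihB => exact Par.app ihA ihB
  | lam A ih => exact Par.lam ih
  | tau A ih => exact Par.tau ih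

theorem par_lift (d : Nat) {M M' : CLam} (h : Par M M') :
    Par (lift d M) (lift d M') := by
  induction h generalizing d with
  | var n => exact par_refl _
  | app _ _ ihM ihN => exact Par.app (ihM d) (ihN d)
  | lam _ ih => exact Par.lam (ih (d+1))
  | tau _ ih => exact Par.tau (ih d)
  | @beta M M' N N' _ _ ihM ihN =>
      have := Par.beta (ihM (d+1)) (ihN d)
      simpa [lift, lift_subst_ge (Nat.zero_le d)] using this
  | tauApp _ _ ihM ihN =>
      simpa [lift] using Par.tauApp (ihM d) (ihN d)

theorem par_subst (k : Nat) {M M' N N' : CLam} (hM : Par M M') (hN : Par N N') :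
    Par (subst k N M) (subst k N' M') := by
  induction hM generalizing k N N' with
  | var n =>
      simp only [subst]; split_ifs
      · exact hN
      · exact par_refl _
      · exact par_refl _
  | app _ _ ihM ihN' => exact Par.app (ihM k hN) (ihN' k hN)
  | lam _ ih => exact Par.lam (ih (k+1) (par_lift 0 hN))
  | tau _ ih => exact Par.tau (ih k hN)
  | @beta A A' B B' _ _ ihA ihB =>
      have := Par.beta (ihA (k+1) (par_lift 0 hN)) (ihB k hN)
      simpa [subst, subst_subst (Nat.zero_le k)] using this
  | tauApp _ _ ihA ihB =>
      simpa [subst] using Par.tauApp (ihA k hN) (ihB k hN)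

/-- complete development -/
def dev : CLam → CLam
  | var n => var n
  | app (lam M) N => tau (subst 0 (dev N) (dev M))
  | app (tau M) N => tau (app (dev M) (dev N))
  | app M N => app (dev M) (dev N)
  | lam M => lam (dev M)
  | tau M => tau (dev M)

theorem par_lam_inv {M X : CLam} (h : Par (lam M) X) :
    ∃ M', X = lam M' ∧ Par M M' := by
  cases h with
  | lam h => exact ⟨_, rfl, h⟩

theorem par_tau_inv {M X : CLam} (h : Par (tau M) X) :
    ∃ M', X = tau M' ∧ Par M M' := by
  cases h with
  | tau h => exact ⟨_, rfl, h⟩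

theorem par_triangle {M N : CLam} (h : Par M N) : Par N (dev M) := by
  induction h with
  | var n => exact par_refl _
  | @app M M' N N' hM hN ihM ihN =>
      cases M with
      | var n => cases hM; exact Par.app ihM ihN
      | lam A =>
          obtain ⟨A', rfl, hA⟩ := par_lam_inv hM
          simp only [dev] at ihM ⊢
          cases ihM with
          | lam hdev => exact Par.beta hdev ihN
      | tau A =>
          obtain ⟨A', rfl, hA⟩ := par_tau_inv hM
          simp only [dev] at ihM ⊢
          cases ihM with
          | tau hdev => exact Par.tauApp hdev ihN
      | app A B => exact Par.app ihM ihN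
  | lam _ ih => exact Par.lam ih
  | tau _ ih => exact Par.tau ih
  | beta _ _ ihM ihN =>
      exact Par.tau (par_subst 0 ihM ihN)
  | tauApp _ _ ihM ihN =>
      exact Par.tau (Par.app ihM ihN)

theorem step_par {M N : CLam} (h : CStep M N) : Par M N := by
  induction h with
  | beta M N => exact Par.beta (par_refl M) (par_refl N)
  | tauApp M N => exact Par.tauApp (par_refl M) (par_refl N)
  | appL N _ ih => exact Par.app ih (par_refl N)
  | appR M _ ih => exact Par.app (par_refl M) ih
  | lam _ ih => exact Par.lam ih
  | tau _ ih => exact Par.tau ih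

theorem star_appL {M M' : CLam} (N : CLam) (h : CStar M M') :
    CStar (app M N) (app M' N) :=
  Relation.ReflTransGen.lift (fun x => app x N) (fun _ _ s => CStep.appL N s) _ _ h

theorem star_appR (M : CLam) {N N' : CLam} (h : CStar N N') :
    CStar (app M N) (app M N') :=
  Relation.ReflTransGen.lift (fun x => app M x) (fun _ _ s => CStep.appR M s) _ _ h

theorem star_lam {M M' : CLam} (h : CStar M M') : CStar (lam M) (lam M') :=
  Relation.ReflTransGen.lift lam (fun _ _ s => CStep.lam s) _ _ h

theorem star_tau {M M' : CLam} (h : CStar M M') : CStar (tau M) (tau M') :=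
  Relation.ReflTransGen.lift tau (fun _ _ s => CStep.tau s) _ _ h

theorem par_star {M N : CLam} (h : Par M N) : CStar M N := by
  induction h with
  | var n => exact Relation.ReflTransGen.refl
  | app _ _ ihM ihN =>
      exact Relation.ReflTransGen.trans (star_appL _ ihM) (star_appR _ ihN)
  | lam _ ih => exact star_lam ih
  | tau _ ih => exact star_tau ih
  | @beta A A' B B' _ _ ihA ihB =>
      have h1 : CStar (app (lam A) B) (app (lam A') B') :=
        Relation.ReflTransGen.trans (star_appL _ (star_lam ihA)) (star_appR _ ihB)
      exact h1.trans (Relation.ReflTransGen.single (CStep.beta A' B'))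
  | @tauApp A A' B B' _ _ ihA ihB =>
      have h1 : CStar (app (tau A) B) (app (tau A') B') :=
        Relation.ReflTransGen.trans (star_appL _ (star_tau ihA)) (star_appR _ ihB)
      exact h1.trans (Relation.ReflTransGen.single (CStep.tauApp A' B'))

theorem parStar_eq_cstar {M N : CLam} :
    Relation.ReflTransGen Par M N ↔ CStar M N := by
  constructor
  · intro h
    have h2 : Relation.ReflTransGen (Relation.ReflTransGen CStep) M N :=
      Relation.ReflTransGen.mono (fun _ _ hp => par_star hp) _ _ h
    rwa [Relation.reflTransGen_idem] at h2
  · intro h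
    exact Relation.ReflTransGen.mono (fun _ _ hs => step_par hs) _ _ h

end CLam

open CLam

theorem clocked_confluent :
    ∀ M N₁ N₂ : CLam, CStar M N₁ → CStar M N₂ →
      ∃ P : CLam, CStar N₁ P ∧ CStar N₂ P := by
  intro M N1 N2 h1 h2
  have hd : ∀ a b c : CLam, Par a b → Par a c →
      ∃ d, Relation.ReflGen Par b d ∧ Relation.ReflTransGen Par c d := by
    intro a b c hab hac
    exact ⟨dev a, Relation.ReflGen.single (par_triangle hab),
      Relation.ReflTransGen.single (par_triangle hac)⟩
  obtain ⟨P, hP1, hP2⟩ := Relation.church_rosser hd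
    (parStar_eq_cstar.mpr h1) (parStar_eq_cstar.mpr h2)
  exact ⟨P, parStar_eq_cstar.mp hP1, parStar_eq_cstar.mp hP2⟩
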